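/- Let g = [[a,b],[conj b, conj a]] be an element of SU(1,1), let p > 1 be real, and let f be a bounded continuous complex-valued function on the open unit disc D = {z ∈ ℂ : |z| < 1}. Then ∫_D f((b + conj(a)·z)/(a + conj(b)·z)) · |a + conj(b)·z|^(−2p) · (1 − |z|²)^(p−2) dλ(z) = ∫_D f(z) · (1 − |z|²)^(p−2) dλ(z), where λ is Lebesgue measure on ℂ ≅ ℝ². (This expresses the invariance of the weighted Bergman inner product under the holomorphic representation T⁺_p of SU(1,1).) -/

import Mathlib

open ComplexConjugate

/-- Invariance of the weighted Bergman inner product under the holomorphic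
representation `T⁺_p` of `SU(1,1)`: for `g = [[a,b],[conj b, conj a]] ∈ SU(1,1)`,
real `p > 1`, and a bounded continuous `f : ℂ → ℂ`,
`∫_D f(M_g(z)) |a + conj(b)z|^{−2p} (1−|z|²)^{p−2} dλ(z) = ∫_D f(z)(1−|z|²)^{p−2} dλ(z)`,
where `D` is the open unit disc and `λ` Lebesgue measure on `ℂ`. -/

lemma det_restrict (c : ℂ) :
    ContinuousLinearMap.det
      ((ContinuousLinearMap.smulRight (1 : ℂ →L[ℂ] ℂ) c).restrictScalars ℝ)
      = Complex.normSq c := by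
  have h : ((ContinuousLinearMap.smulRight (1 : ℂ →L[ℂ] ℂ) c).restrictScalars ℝ).toLinearMap
      = Algebra.lmul ℝ ℂ c := by
    ext z
    simp [mul_comm]
  rw [ContinuousLinearMap.det, h]
  rw [← Algebra.norm_apply, Algebra.norm_complex_apply]

lemma aux_key (a b z : ℂ) :
    Complex.normSq (a + conj b * z) - Complex.normSq (b + conj a * z)
      = (Complex.normSq a - Complex.normSq b) * (1 - Complex.normSq z) := by
  simp only [Complex.normSq_apply, Complex.add_re, Complex.add_im, Complex.mul_re,
    Complex.mul_im, Complex.conj_re, Complex.conj_im]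
  ring

lemma aux_den_ne (a b : ℂ) (hab : Complex.normSq a - Complex.normSq b = 1)
    {z : ℂ} (hz : ‖z‖ < 1) : a + conj b * z ≠ 0 := by
  intro h
  have h1 : ‖a‖ = ‖conj b * z‖ := by
    have : a = -(conj b * z) := by linear_combination h
    rw [this, norm_neg]
  have hb : ‖conj b * z‖ ≤ ‖b‖ * ‖z‖ := by
    rw [norm_mul, Complex.norm_conj]
  have ha2 : ‖a‖ ^ 2 = 1 + ‖b‖ ^ 2 := by
    rw [Complex.sq_norm, Complex.sq_norm]; linarith
  have h0 : (0:ℝ) ≤ ‖b‖ := norm_nonneg b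
  have h0' : (0:ℝ) ≤ ‖z‖ := norm_nonneg z
  have hle : ‖a‖ ≤ ‖b‖ * ‖z‖ := h1 ▸ hb
  have hsq : ‖a‖ ^ 2 ≤ (‖b‖ * ‖z‖) ^ 2 :=
    pow_le_pow_left₀ (norm_nonneg a) hle 2
  have hz2 : ‖z‖ ^ 2 ≤ 1 := by nlinarith
  have : ‖b‖ ^ 2 * (‖z‖ ^ 2) ≤ ‖b‖ ^ 2 * 1 :=
    mul_le_mul_of_nonneg_left hz2 (sq_nonneg _)
  nlinarith [this]

lemma aux_mem (a b : ℂ) (hab : Complex.normSq a - Complex.normSq b = 1)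
    {z : ℂ} (hz : z ∈ Metric.ball (0:ℂ) 1) :
    (b + conj a * z) / (a + conj b * z) ∈ Metric.ball (0:ℂ) 1 := by
  rw [Metric.mem_ball, dist_zero_right] at hz ⊢
  have hd := aux_den_ne a b hab hz
  have hkey := aux_key a b z
  rw [hab, one_mul] at hkey
  have hz2 : Complex.normSq z < 1 := by
    rw [← Complex.sq_norm]; nlinarith [norm_nonneg z]
  have hpos : 0 < Complex.normSq (a + conj b * z) := Complex.normSq_pos.2 hd
  have h2 : Complex.normSq ((b + conj a * z) / (a + conj b * z)) < 1 := by
    rw [Complex.normSq_div, div_lt_one hpos]; linarith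
  rw [← Complex.sq_norm] at h2
  nlinarith [norm_nonneg ((b + conj a * z) / (a + conj b * z))]

lemma habC_of (a b : ℂ) (hab : Complex.normSq a - Complex.normSq b = 1) :
    a * conj a - b * conj b = 1 := by
  rw [Complex.mul_conj, Complex.mul_conj, ← Complex.ofReal_sub, hab, Complex.ofReal_one]

lemma aux_inj (a b : ℂ) (hab : Complex.normSq a - Complex.normSq b = 1) :
    Set.InjOn (fun z => (b + conj a * z) / (a + conj b * z)) (Metric.ball (0:ℂ) 1) := by
  intro z₁ h₁ z₂ h₂ h
  rw [Metric.mem_ball, dist_zero_right] at h₁ h₂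
  have d1 := aux_den_ne a b hab h₁
  have d2 := aux_den_ne a b hab h₂
  simp only at h
  rw [div_eq_div_iff d1 d2] at h
  have habC := habC_of a b hab
  linear_combination h - (z₁ - z₂) * habC

lemma aux_MN (a b : ℂ) (hab : Complex.normSq a - Complex.normSq b = 1)
    {w : ℂ} (hw : ‖w‖ < 1) :
    (b + conj a * ((-b + a * w) / (conj a - conj b * w))) /
      (a + conj b * ((-b + a * w) / (conj a - conj b * w))) = w := by
  have habC := habC_of a b hab
  have hab' : Complex.normSq (conj a) - Complex.normSq (-b) = 1 := by
    rwa [Complex.normSq_conj, Complex.normSq_neg]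
  have hd : conj a - conj b * w ≠ 0 := by
    have := aux_den_ne (conj a) (-b) hab' hw
    simpa [sub_eq_add_neg, neg_mul] using this
  have e1 : (a + conj b * ((-b + a * w) / (conj a - conj b * w))) * (conj a - conj b * w) = 1 := by
    field_simp
    linear_combination habC
  have hd2 : a + conj b * ((-b + a * w) / (conj a - conj b * w)) ≠ 0 :=
    left_ne_zero_of_mul_eq_one e1
  rw [div_eq_iff hd2]
  linear_combination (-b + a * w) * mul_inv_cancel₀ hd

lemma aux_deriv (a b : ℂ) (hab : Complex.normSq a - Complex.normSq b = 1)
    {z : ℂ} (hd : a + conj b * z ≠ 0) :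
    HasDerivAt (fun z => (b + conj a * z) / (a + conj b * z))
      (((a + conj b * z) ^ 2)⁻¹) z := by
  have habC := habC_of a b hab
  have h1 : HasDerivAt (fun z : ℂ => b + conj a * z) (conj a) z := by
    simpa using ((hasDerivAt_id z).const_mul (conj a)).const_add b
  have h2 : HasDerivAt (fun z : ℂ => a + conj b * z) (conj b) z := by
    simpa using ((hasDerivAt_id z).const_mul (conj b)).const_add a
  refine (h1.div h2 hd).congr_deriv ?_
  rw [div_eq_iff (pow_ne_zero 2 hd)]
  field_simp
  linear_combination habC

theorem stmt_0 (a b : ℂ) (hab : ‖a‖ ^ 2 - ‖b‖ ^ 2 = 1)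
    (p : ℝ) (hp : 1 < p) (f : ℂ → ℂ) (hf : Continuous f)
    (hbd : ∃ C : ℝ, ∀ z : ℂ, ‖f z‖ ≤ C) :
    (∫ z in Metric.ball (0 : ℂ) 1,
        f ((b + conj a * z) / (a + conj b * z)) *
          ((‖a + conj b * z‖ ^ (-(2 * p)) : ℝ) : ℂ) *
          (((1 - ‖z‖ ^ 2) ^ (p - 2) : ℝ) : ℂ))
    = ∫ z in Metric.ball (0 : ℂ) 1,
        f z * (((1 - ‖z‖ ^ 2) ^ (p - 2) : ℝ) : ℂ) := by
  have habn : Complex.normSq a - Complex.normSq b = 1 := by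
    rw [← Complex.sq_norm, ← Complex.sq_norm]; exact hab
  have hab' : Complex.normSq (conj a) - Complex.normSq (-b) = 1 := by
    rwa [Complex.normSq_conj, Complex.normSq_neg]
  set s : Set ℂ := Metric.ball (0 : ℂ) 1 with hs
  set M : ℂ → ℂ := fun z => (b + conj a * z) / (a + conj b * z) with hM
  set F : ℂ → ℂ := fun w => f w * (((1 - ‖w‖ ^ 2) ^ (p - 2) : ℝ) : ℂ) with hF
  set f' : ℂ → ℂ →L[ℝ] ℂ := fun z =>
    (ContinuousLinearMap.smulRight (1 : ℂ →L[ℂ] ℂ)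
      (((a + conj b * z) ^ 2)⁻¹)).restrictScalars ℝ with hf'
  have habs : ∀ z ∈ s, ‖z‖ < 1 := by
    intro z hz
    rwa [hs, Metric.mem_ball, dist_zero_right] at hz
  have himg : M '' s = s := by
    apply Set.Subset.antisymm
    · rintro w ⟨z, hz, rfl⟩
      exact aux_mem a b habn hz
    · intro w hw
      have hw' := habs w hw
      refine ⟨(-b + a * w) / (conj a - conj b * w), ?_, ?_⟩
      · have := aux_mem (conj a) (-b) hab' hw
        simpa [hs, Metric.mem_ball, dist_zero_right, 
          sub_eq_add_neg, neg_mul] using this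
      · exact aux_MN a b habn hw'
  have hderiv : ∀ z ∈ s, HasFDerivWithinAt M (f' z) s z := by
    intro z hz
    exact (((aux_deriv a b habn
      (aux_den_ne a b habn (habs z hz))).hasFDerivAt).restrictScalars ℝ).hasFDerivWithinAt
  have hinj : Set.InjOn M s := aux_inj a b habn
  have hrw : (∫ z in s, F z) = ∫ z in s, |(f' z).det| • F (M z) := by
    conv_lhs => rw [← himg]
    exact MeasureTheory.integral_image_eq_integral_abs_det_fderiv_smul
      MeasureTheory.volume measurableSet_ball hderiv hinj F
  rw [show (∫ z in Metric.ball (0:ℂ) 1,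
      f z * (((1 - ‖z‖ ^ 2) ^ (p - 2) : ℝ) : ℂ)) = ∫ z in s, F z from rfl, hrw]
  apply MeasureTheory.setIntegral_congr_fun measurableSet_ball
  intro z hz
  simp only []
  have hz1 := habs z hz
  have hdz : a + conj b * z ≠ 0 := aux_den_ne a b habn hz1
  set u : ℂ := a + conj b * z with hu
  set r : ℝ := ‖u‖ with hr
  have hrpos : 0 < r := norm_pos_iff.2 hdz
  have ht : 0 < 1 - ‖z‖ ^ 2 := by nlinarith [norm_nonneg z]
  set t : ℝ := 1 - ‖z‖ ^ 2 with htd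
  have hne : Complex.normSq u ≠ 0 := (Complex.normSq_pos.2 hdz).ne'
  have hnu : Complex.normSq u = r ^ 2 := (Complex.sq_norm u).symm
  -- determinant
  have hdet : (f' z).det = ((r ^ 2) ^ 2)⁻¹ := by
    rw [hf']
    simp only [det_restrict]
    rw [map_inv₀ Complex.normSq, map_pow Complex.normSq, ← hu, hnu]
  -- weight identity
  have hkey := aux_key a b z
  rw [habn, one_mul] at hkey
  have hMz : Complex.normSq (M z) = Complex.normSq (b + conj a * z) / Complex.normSq u := by
    rw [hM]
    exact Complex.normSq_div _ _
  have hw1 : 1 - ‖M z‖ ^ 2 = t / r ^ 2 := by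
    rw [Complex.sq_norm, hMz, ← hnu, eq_div_iff hne, sub_mul,
      div_mul_cancel₀ _ hne, one_mul, htd, Complex.sq_norm z]
    rw [← hu] at hkey
    linarith [hkey]
  -- real scalar identity
  have e1 : (((r ^ 2) ^ 2 : ℝ))⁻¹ = r ^ ((-4 : ℝ)) := by
    rw [← pow_mul]
    norm_num
  have e2 : ((r ^ 2 : ℝ)) ^ (p - 2) = r ^ (2 * (p - 2)) := by
    rw [← Real.rpow_natCast r 2, ← Real.rpow_mul hrpos.le]
    norm_num
  have hreal : ((r ^ 2) ^ 2)⁻¹ * (t / r ^ 2) ^ (p - 2) = r ^ (-(2 * p)) * t ^ (p - 2) := by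
    rw [Real.div_rpow ht.le (sq_nonneg r), e1, e2, div_eq_mul_inv,
      ← Real.rpow_neg hrpos.le, mul_comm (t ^ (p - 2)) _, ← mul_assoc,
      ← Real.rpow_add hrpos]
    have : (-4 : ℝ) + -(2 * (p - 2)) = -(2 * p) := by ring
    rw [this]
  -- conclude
  rw [hdet, _root_.abs_of_nonneg (by positivity : (0:ℝ) ≤ ((r ^ 2) ^ 2)⁻¹)]
  rw [hF]
  simp only []
  rw [hw1, Complex.real_smul]
  calc f (M z) * ((r ^ (-(2 * p)) : ℝ) : ℂ) * ((t ^ (p - 2) : ℝ) : ℂ)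
      = f (M z) * (((r ^ (-(2 * p)) * t ^ (p - 2) : ℝ)) : ℂ) := by push_cast; ring
    _ = f (M z) * ((((r ^ 2) ^ 2)⁻¹ * (t / r ^ 2) ^ (p - 2) : ℝ) : ℂ) := by rw [hreal]
    _ = ((((r ^ 2) ^ 2)⁻¹ : ℝ) : ℂ) * (f (M z) * (((t / r ^ 2) ^ (p - 2) : ℝ) : ℂ)) := by
        push_cast; ring
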